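/- Let S ∈ Σ^∞ and let S' be obtained from S by inserting marker characters m ∉ Σ at positions with nondecreasing unbounded gaps. Then for every positive integer l, the l-th normalized block entropy satisfies H_l(S') = H_l(S), where in H_l(S) the sequence S is regarded as a sequence over the enlarged alphabet Σ_m = Σ ∪ {m}. Consequently H(S') = H(S). -/

import Mathlib

open Filter

/-- The prefix of length `n` of the infinite sequence `S`. -/
def pre {α : Type*} (S : ℕ → α) (n : ℕ) : List α := List.ofFn fun i : Fin n => S i

/-- The number of (possibly overlapping) occurrences of `w` as a substring of `x`. -/
def occ {α : Type*} [DecidableEq α] (w x : List α) : ℕ :=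
  ((List.range x.length).filter fun i => (x.drop i).take w.length = w).length

/-- The finite substring `S[a+1..b]` (0-indexed: characters `S a, ..., S (b-1)`). -/
def seg {α : Type*} (S : ℕ → α) (a b : ℕ) : List α :=
  (List.range (b - a)).map fun j => S (a + j)

/-- Prefix of the marked sequence `S'` after the `j`-th marker. -/
def markPre {α : Type*} (S : ℕ → α) (i : ℕ → ℕ) : ℕ → List (Option α)
  | 0 => []
  | j + 1 => markPre S i j ++ (seg S (i j) (i (j + 1))).map some ++ [none]

/-- `freqn w x = #(w,x) / (|x| - |w| + 1)`, the frequency of `w` in `x`. -/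
noncomputable def freqn {Γ : Type*} [DecidableEq Γ] (w x : List Γ) : ℝ :=
  (occ w x : ℝ) / ((x.length : ℝ) - (w.length : ℝ) + 1)

/-- The `l`-th normalized block entropy of the sequence `T` over alphabet `Γ`:
`H_l(T) = (1/(l log|Γ|)) liminf_n ∑_{w ∈ Γ^l} freq(w,T[1..n]) log(1/freq(w,T[1..n]))`. -/
noncomputable def Hl {Γ : Type*} [Fintype Γ] [DecidableEq Γ] (T : ℕ → Γ) (l : ℕ) : ℝ :=
  ((l : ℝ) * Real.log (Fintype.card Γ))⁻¹ *
    liminf (fun n : ℕ =>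
      ∑ v : Fin l → Γ, Real.negMulLog (freqn (List.ofFn v) (pre T n))) atTop


section OccBasics
set_option linter.unusedSectionVars false
variable {Γ : Type*} [DecidableEq Γ]

def occF (w x : List Γ) : Finset ℕ :=
  (Finset.range x.length).filter (fun i => (x.drop i).take w.length = w)

lemma occ_eq_card (w x : List Γ) : occ w x = (occF w x).card := rfl

lemma win_len {w x : List Γ} (hw : 1 ≤ w.length) {i : ℕ}
    (h : (x.drop i).take w.length = w) : i + w.length ≤ x.length := by
  have := congrArg List.length h
  simp [List.length_take, List.length_drop] at this
  omega

lemma mem_occF {w x : List Γ} {i : ℕ} :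
    i ∈ occF w x ↔ i < x.length ∧ (x.drop i).take w.length = w := by
  simp [occF]

lemma occ_le_length (w x : List Γ) : occ w x ≤ x.length := by
  rw [occ_eq_card]
  calc (occF w x).card ≤ (Finset.range x.length).card :=
    Finset.card_le_card (Finset.filter_subset _ _)
  _ = x.length := Finset.card_range _

-- window of a++b at position i with window inside a
lemma win_left {w a b : List Γ} {i : ℕ} (h : i + w.length ≤ a.length) :
    ((a ++ b).drop i).take w.length = (a.drop i).take w.length := by
  rw [List.drop_append_of_le_length (by omega), List.take_append_of_le_length]
  rw [List.length_drop]; omega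

lemma win_right (w a b : List Γ) (i : ℕ) :
    ((a ++ b).drop (a.length + i)).take w.length = (b.drop i).take w.length := by
  rw [← List.drop_drop, List.drop_left]

lemma occ_append_ge {w : List Γ} (hw : 1 ≤ w.length) (a b : List Γ) :
    occ w a + occ w b ≤ occ w (a ++ b) := by
  simp only [occ_eq_card]
  have hsub : occF w a ∪ (occF w b).image (a.length + ·) ⊆ occF w (a ++ b) := by
    intro i hi
    rcases Finset.mem_union.1 hi with hi | hi
    · rw [mem_occF] at hi ⊢
      have hlen := win_len hw hi.2
      refine ⟨by simp only [List.length_append]; omega, ?_⟩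
      rw [win_left hlen, hi.2]
    · simp only [Finset.mem_image] at hi
      obtain ⟨j, hj, rfl⟩ := hi
      rw [mem_occF] at hj ⊢
      refine ⟨by simp only [List.length_append]; omega, ?_⟩
      rw [win_right, hj.2]
  have hdisj : Disjoint (occF w a) ((occF w b).image (a.length + ·)) := by
    rw [Finset.disjoint_left]
    intro i hi hi'
    rw [mem_occF] at hi
    have h1 := win_len hw hi.2
    simp only [Finset.mem_image] at hi'
    obtain ⟨j, _, rfl⟩ := hi'
    omega
  calc (occF w a).card + (occF w b).card
      = (occF w a).card + ((occF w b).image (a.length + ·)).card := by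
        rw [Finset.card_image_of_injective _ (fun x y h => by omega)]
    _ = (occF w a ∪ (occF w b).image (a.length + ·)).card := (Finset.card_union_of_disjoint hdisj).symm
    _ ≤ (occF w (a ++ b)).card := Finset.card_le_card hsub

lemma occ_append_le {w : List Γ} (hw : 1 ≤ w.length) (a b : List Γ) :
    occ w (a ++ b) ≤ occ w a + occ w b + (w.length - 1) := by
  simp only [occ_eq_card]
  have hsub : occF w (a ++ b) ⊆ (occF w a ∪ (occF w b).image (a.length + ·)) ∪
      Finset.Ico (a.length + 1 - w.length) a.length := by
    intro i hi
    rw [mem_occF] at hi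
    obtain ⟨hilt, hwin⟩ := hi
    rw [List.length_append] at hilt
    rcases le_or_gt (i + w.length) a.length with h | h
    · refine Finset.mem_union_left _ (Finset.mem_union_left _ ?_)
      rw [mem_occF]
      exact ⟨by omega, by rw [← win_left h, hwin]⟩
    · rcases le_or_gt a.length i with h2 | h2
      · refine Finset.mem_union_left _ (Finset.mem_union_right _ ?_)
        simp only [Finset.mem_image]
        refine ⟨i - a.length, ?_, by omega⟩
        rw [mem_occF]
        constructor
        · omega
        · have := win_right w a b (i - a.length)
          rw [show a.length + (i - a.length) = i by omega] at this
          rw [← this, hwin]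
      · exact Finset.mem_union_right _ (by simp only [Finset.mem_Ico]; omega)
  calc (occF w (a ++ b)).card
      ≤ ((occF w a ∪ (occF w b).image (a.length + ·)) ∪
          Finset.Ico (a.length + 1 - w.length) a.length).card := Finset.card_le_card hsub
    _ ≤ ((occF w a).card + (occF w b).card) + (w.length - 1) := by
        refine le_trans (Finset.card_union_le _ _) (Nat.add_le_add ?_ ?_)
        · refine le_trans (Finset.card_union_le _ _) (Nat.add_le_add le_rfl ?_)
          exact le_of_eq (Finset.card_image_of_injective _ (fun x y h => by omega))
        · rw [Nat.card_Ico]; omega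

lemma occ_singleton_le (w : List Γ) (c : Γ) : occ w [c] ≤ 1 := by
  have := occ_le_length (w := w) (x := [c])
  simpa using this

lemma occ_eq_zero {w x : List Γ} (h : x.length < w.length) : occ w x = 0 := by
  rw [occ_eq_card]
  rw [Finset.card_eq_zero]
  ext i
  simp only [mem_occF, Finset.notMem_empty, iff_false, not_and]
  intro hi hcontra
  have hw : 1 ≤ w.length := by omega
  have := win_len hw hcontra
  omega


lemma occ_le_sub {w x : List Γ} (hw : 1 ≤ w.length) (h : w.length ≤ x.length) :
    occ w x + w.length ≤ x.length + 1 := by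
  · rw [occ_eq_card]
    have hsub : occF w x ⊆ Finset.range (x.length + 1 - w.length) := by
      intro i hi
      rw [mem_occF] at hi
      have := win_len hw hi.2
      simp only [Finset.mem_range]
      omega
    have := Finset.card_le_card hsub
    rw [Finset.card_range] at this
    omega


end OccBasics

section Structural
set_option linter.unusedSectionVars false
variable {α : Type*} [DecidableEq α]

lemma pre_length (S : ℕ → α) (n : ℕ) : (pre S n).length = n := by simp [pre]

lemma seg_length (S : ℕ → α) (a b : ℕ) : (seg S a b).length = b - a := by simp [seg]

lemma pre_succ (S : ℕ → α) (n : ℕ) : pre S (n + 1) = pre S n ++ [S n] := by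
  rw [pre, List.ofFn_succ']
  simp [pre, List.concat_eq_append]

lemma seg_succ (S : ℕ → α) (a t : ℕ) :
    seg S a (a + t + 1) = seg S a (a + t) ++ [S (a + t)] := by
  simp only [seg, show a + t + 1 - a = t + 1 by omega, show a + t - a = t by omega,
    List.range_succ, List.map_append, List.map_cons, List.map_nil]

lemma pre_add (S : ℕ → α) (a t : ℕ) : pre S (a + t) = pre S a ++ seg S a (a + t) := by
  induction t with
  | zero => simp [seg]
  | succ t ih =>
      rw [show a + (t + 1) = (a + t) + 1 by ring, pre_succ, ih, seg_succ, List.append_assoc]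

lemma pre_split (S : ℕ → α) {a b : ℕ} (h : a ≤ b) : pre S b = pre S a ++ seg S a b := by
  have := pre_add S a (b - a)
  rwa [show a + (b - a) = b by omega] at this

lemma pre_take (S : ℕ → α) {m n : ℕ} (h : m ≤ n) : (pre S n).take m = pre S m := by
  rw [pre_split S h, List.take_append_of_le_length (by rw [pre_length]),
    List.take_of_length_le (by rw [pre_length])]

lemma seg_take (S : ℕ → α) (a : ℕ) {t b : ℕ} (h : a + t ≤ b) :
    (seg S a b).take t = seg S a (a + t) := by
  simp only [seg, ← List.map_take, List.take_range]
  rw [show min t (b - a) = t by omega, show a + t - a = t by omega]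

lemma map_some_seg (S : ℕ → α) (a b : ℕ) :
    (seg S a b).map some = seg (fun n => some (S n)) a b := by
  simp [seg, List.map_map]

end Structural

section Marked
set_option linter.unusedSectionVars false
variable {α : Type*} [DecidableEq α] {S : ℕ → α} {i : ℕ → ℕ}

/-- index of the current block -/
def Jm (i : ℕ → ℕ) (m : ℕ) : ℕ := Nat.findGreatest (fun j => i j + j ≤ m) m

variable (hi0 : i 0 = 0) (hmono : StrictMono i)
include hi0 hmono

lemma Jm_le (m : ℕ) : i (Jm i m) + Jm i m ≤ m :=
  Nat.findGreatest_spec (P := fun j => i j + j ≤ m) (Nat.zero_le m) (by simp [hi0])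

lemma Jm_le_self (m : ℕ) : Jm i m ≤ m := Nat.findGreatest_le m

lemma Jm_two_le (m : ℕ) : 2 * Jm i m ≤ m := by
  have h1 := Jm_le hi0 hmono m
  have h2 : Jm i m ≤ i (Jm i m) := hmono.le_apply
  omega

lemma Jm_gt (m : ℕ) : m < i (Jm i m + 1) + (Jm i m + 1) := by
  by_contra h
  push_neg at h
  have h2 : Jm i m + 1 ≤ i (Jm i m + 1) := hmono.le_apply
  have h3 : Jm i m + 1 ≤ m := by omega
  have : Jm i m + 1 ≤ Jm i m := Nat.le_findGreatest (P := fun j => i j + j ≤ m) h3 h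
  omega

lemma Jm_succ_le (m : ℕ) : Jm i (m + 1) ≤ Jm i m + 1 := by
  by_contra h
  push_neg at h
  have h1 : i (Jm i (m + 1)) + Jm i (m + 1) ≤ m + 1 := Jm_le hi0 hmono (m + 1)
  have h2 : m < i (Jm i m + 1) + (Jm i m + 1) := Jm_gt hi0 hmono m
  have h3 : i (Jm i m + 1) + 1 ≤ i (Jm i (m + 1)) := by
    have : Jm i m + 1 < Jm i (m + 1) := h
    exact Nat.succ_le_of_lt (hmono this)
  omega

lemma Jm_mono : Monotone (Jm i) := by
  refine monotone_nat_of_le_succ fun m => ?_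
  exact Nat.le_findGreatest (P := fun j => i j + j ≤ m + 1)
    (le_trans (Jm_le_self hi0 hmono m) (Nat.le_succ m))
    (le_trans (Jm_le hi0 hmono m) (Nat.le_succ m))

lemma markPre_length : ∀ j, (markPre S i j).length = i j + j
  | 0 => by simp [markPre, hi0]
  | j + 1 => by
      have hij : i j ≤ i (j + 1) := (hmono.monotone (Nat.le_succ j))
      simp [markPre, markPre_length j, seg_length]
      omega

lemma preS'_decomp {S' : ℕ → Option α} (hS' : ∀ j, pre S' (i j + j) = markPre S i j) (m : ℕ) :
    pre S' m = markPre S i (Jm i m) ++ (seg S (i (Jm i m)) (m - Jm i m)).map some := by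
  set j := Jm i m with hj
  have h1 : i j + j ≤ m := Jm_le hi0 hmono m
  have h2 : m < i (j + 1) + (j + 1) := Jm_gt hi0 hmono m
  have hij : i j ≤ i (j + 1) := hmono.monotone (Nat.le_succ j)
  have hm' : m ≤ i (j + 1) + (j + 1) := le_of_lt h2
  have key : pre S' m = (pre S' (i (j + 1) + (j + 1))).take m := (pre_take S' hm').symm
  rw [key, hS' (j + 1)]
  show (markPre S i j ++ (seg S (i j) (i (j+1))).map some ++ [none]).take m = _
  rw [List.take_append_of_le_length (by
        simp only [List.length_append, List.length_map, markPre_length hi0 hmono, seg_length]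
        omega),
    List.take_append,
    List.take_of_length_le (by rw [markPre_length hi0 hmono]; omega)]
  congr 1
  rw [markPre_length hi0 hmono, ← List.map_take,
    seg_take S (i j) (show i j + (m - (i j + j)) ≤ i (j + 1) by omega),
    show i j + (m - (i j + j)) = m - j by omega]

end Marked

section Compare
set_option linter.unusedSectionVars false
variable {α : Type*} [DecidableEq α] {S : ℕ → α} {i : ℕ → ℕ}
variable (hi0 : i 0 = 0) (hmono : StrictMono i)
include hi0 hmono

lemma occ_blocks {w : List (Option α)} (hw : 1 ≤ w.length) : ∀ j : ℕ,
    occ w (markPre S i j) ≤ occ w (pre (fun n => some (S n)) (i j)) + 2 * w.length * j ∧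
    occ w (pre (fun n => some (S n)) (i j)) ≤ occ w (markPre S i j) + 2 * w.length * j
  | 0 => by
      constructor <;> simp [markPre, hi0, pre]
  | j + 1 => by
      obtain ⟨ih1, ih2⟩ := occ_blocks hw j
      set T : ℕ → Option α := fun n => some (S n) with hT
      have hij : i j ≤ i (j + 1) := hmono.monotone (Nat.le_succ j)
      have hBmap : (seg S (i j) (i (j + 1))).map some = seg T (i j) (i (j + 1)) :=
        map_some_seg S _ _
      have hpre : pre T (i (j + 1)) = pre T (i j) ++ seg T (i j) (i (j + 1)) := pre_split T hij
      set X := markPre S i j ++ (seg S (i j) (i (j + 1))).map some with hX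
      have hmark : markPre S i (j + 1) = X ++ [none] := rfl
      have h1 : occ w (markPre S i j) + occ w (seg T (i j) (i (j + 1))) ≤ occ w X := by
        rw [hX, ← hBmap]; exact occ_append_ge hw _ _
      have h2 : occ w X ≤ occ w (markPre S i j) + occ w (seg T (i j) (i (j + 1))) + (w.length - 1) := by
        rw [hX, ← hBmap]; exact occ_append_le hw _ _
      have h3 : occ w X ≤ occ w (X ++ [none]) :=
        le_trans (Nat.le_add_right _ _) (occ_append_ge hw X [none])
      have h4 : occ w (X ++ [none]) ≤ occ w X + 1 + (w.length - 1) :=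
        le_trans (occ_append_le hw X [none])
          (by have := occ_singleton_le w (none : Option α); omega)
      have h5 : occ w (pre T (i j)) + occ w (seg T (i j) (i (j + 1))) ≤
          occ w (pre T (i (j + 1))) := by
        rw [hpre]; exact occ_append_ge hw _ _
      have h6 : occ w (pre T (i (j + 1))) ≤
          occ w (pre T (i j)) + occ w (seg T (i j) (i (j + 1))) + (w.length - 1) := by
        rw [hpre]; exact occ_append_le hw _ _
      rw [hmark]
      have hL : 1 ≤ w.length := hw
      have hring : 2 * w.length * (j + 1) = 2 * w.length * j + w.length + w.length := by ring
      omega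

lemma occ_compare {S' : ℕ → Option α} (hS' : ∀ j, pre S' (i j + j) = markPre S i j)
    {w : List (Option α)} (hw : 1 ≤ w.length) (m : ℕ) :
    occ w (pre S' m) ≤ occ w (pre (fun n => some (S n)) (m - Jm i m)) +
      2 * w.length * (Jm i m + 1) ∧
    occ w (pre (fun n => some (S n)) (m - Jm i m)) ≤ occ w (pre S' m) +
      2 * w.length * (Jm i m + 1) := by
  obtain ⟨b1, b2⟩ := occ_blocks (S := S) hi0 hmono hw (Jm i m)
  set T : ℕ → Option α := fun n => some (S n) with hT
  set j := Jm i m with hj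
  have h1 : i j + j ≤ m := Jm_le hi0 hmono m
  have hdec : pre S' m = markPre S i j ++ seg T (i j) (m - j) := by
    rw [preS'_decomp hi0 hmono hS' m, map_some_seg]
  have hpre : pre T (m - j) = pre T (i j) ++ seg T (i j) (m - j) := pre_split T (by omega)
  have h2 : occ w (markPre S i j) + occ w (seg T (i j) (m - j)) ≤ occ w (pre S' m) := by
    rw [hdec]; exact occ_append_ge hw _ _
  have h3 : occ w (pre S' m) ≤ occ w (markPre S i j) + occ w (seg T (i j) (m - j)) +
      (w.length - 1) := by
    rw [hdec]; exact occ_append_le hw _ _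
  have h4 : occ w (pre T (i j)) + occ w (seg T (i j) (m - j)) ≤ occ w (pre T (m - j)) := by
    rw [hpre]; exact occ_append_ge hw _ _
  have h5 : occ w (pre T (m - j)) ≤ occ w (pre T (i j)) + occ w (seg T (i j) (m - j)) +
      (w.length - 1) := by
    rw [hpre]; exact occ_append_le hw _ _
  have hL : 1 ≤ w.length := hw
  have hring : 2 * w.length * (j + 1) = 2 * w.length * j + w.length + w.length := by ring
  omega

end Compare

section Analysis
set_option linter.unusedSectionVars false
open Real

lemma freqn_mem_Icc {Γ : Type*} [DecidableEq Γ] {w : List Γ} (x : List Γ)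
    (hw : 1 ≤ w.length) : freqn w x ∈ Set.Icc (0:ℝ) 1 := by
  rcases lt_or_ge x.length w.length with h | h
  · rw [freqn, occ_eq_zero h]
    simp
  · have hocc : occ w x + w.length ≤ x.length + 1 := occ_le_sub hw h
    have hd : (1:ℝ) ≤ (x.length : ℝ) - (w.length : ℝ) + 1 := by
      have : (w.length : ℝ) ≤ (x.length : ℝ) := by exact_mod_cast h
      linarith
    constructor
    · exact div_nonneg (by positivity) (by linarith)
    · rw [freqn, div_le_one (by linarith)]
      have : (occ w x : ℝ) + (w.length : ℝ) ≤ (x.length : ℝ) + 1 := by exact_mod_cast hocc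
      linarith

lemma frac_diff {a b d2 Δ J : ℝ} (hb0 : 0 ≤ b) (h2 : 1 ≤ d2) (hJ : 0 ≤ J)
    (hΔ : |a - b| ≤ Δ) (hbd : b ≤ d2) :
    |a / (d2 + J) - b / d2| ≤ (Δ + J) / (d2 + J) := by
  have hd2 : (0:ℝ) < d2 := by linarith
  have hd1 : (0:ℝ) < d2 + J := by linarith
  have hΔ0 : 0 ≤ Δ := le_trans (abs_nonneg _) hΔ
  have key : a / (d2 + J) - b / d2 = ((a - b) * d2 - b * J) / ((d2 + J) * d2) := by
    field_simp
    ring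
  rw [key, abs_div, abs_of_pos (mul_pos hd1 hd2)]
  have hnum : |(a - b) * d2 - b * J| ≤ (Δ + J) * d2 := by
    have h1 : |(a - b) * d2 - b * J| ≤ |a - b| * d2 + b * J := by
      refine le_trans (abs_sub _ _) ?_
      rw [abs_mul, abs_mul, abs_of_pos hd2, abs_of_nonneg hb0, abs_of_nonneg hJ]
    nlinarith
  calc |(a - b) * d2 - b * J| / ((d2 + J) * d2) ≤ ((Δ + J) * d2) / ((d2 + J) * d2) := by
        gcongr
    _ = (Δ + J) / (d2 + J) := by
        rw [div_eq_div_iff (by positivity) (by positivity)]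
        ring

lemma negMulLog_abs_le {t : ℝ} (h : t ∈ Set.Icc (0:ℝ) 1) : |negMulLog t| ≤ 1 := by
  obtain ⟨h0, h1⟩ := h
  rw [abs_of_nonneg (negMulLog_nonneg h0 h1)]
  rcases eq_or_lt_of_le h0 with h0' | h0'
  · simp [← h0']
  · have hlog : Real.log (1/t) ≤ 1/t - 1 := Real.log_le_sub_one_of_pos (by positivity)
    rw [one_div, Real.log_inv] at hlog
    rw [negMulLog]
    nlinarith [mul_le_mul_of_nonneg_left hlog (le_of_lt h0'), mul_inv_cancel₀ (ne_of_gt h0')]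

lemma negMulLog_tendsto_diff {x y : ℕ → ℝ} (hx : ∀ m, x m ∈ Set.Icc (0:ℝ) 1)
    (hy : ∀ m, y m ∈ Set.Icc (0:ℝ) 1)
    (h : Filter.Tendsto (fun m => x m - y m) Filter.atTop (nhds 0)) :
    Filter.Tendsto (fun m => negMulLog (x m) - negMulLog (y m)) Filter.atTop (nhds 0) := by
  have huc : UniformContinuousOn negMulLog (Set.Icc 0 1) :=
    isCompact_Icc.uniformContinuousOn_of_continuous Real.continuous_negMulLog.continuousOn
  rw [Metric.uniformContinuousOn_iff] at huc
  rw [NormedAddCommGroup.tendsto_nhds_zero] at h ⊢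
  intro ε hε
  obtain ⟨δ, hδ, hδ'⟩ := huc ε hε
  filter_upwards [h δ hδ] with m hm
  have := hδ' (x m) (hx m) (y m) (hy m) (by rwa [Real.dist_eq, ← Real.norm_eq_abs])
  rwa [Real.dist_eq, ← Real.norm_eq_abs] at this

lemma le_liminf_comp (u : ℕ → ℝ) (C : ℝ) (hb : ∀ n, |u n| ≤ C) {φ : ℕ → ℕ}
    (hφ : Filter.Tendsto φ Filter.atTop Filter.atTop) :
    Filter.liminf u Filter.atTop ≤ Filter.liminf (u ∘ φ) Filter.atTop := by
  have h1 : Filter.liminf u (Filter.map φ Filter.atTop) = Filter.liminf (u ∘ φ) Filter.atTop := by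
    rw [Filter.liminf, Filter.liminf, Filter.map_map]
  rw [← h1]
  haveI : (Filter.map φ Filter.atTop).NeBot := Filter.map_neBot
  refine Filter.liminf_le_liminf_of_le hφ ?_ ?_
  · exact Filter.isBoundedUnder_of ⟨-C, fun n => neg_le_of_abs_le (hb n)⟩
  · exact (Filter.isBoundedUnder_of ⟨C, fun n => le_of_abs_le (hb n)⟩).isCoboundedUnder_ge

lemma liminf_comp_eq (u : ℕ → ℝ) (C : ℝ) (hb : ∀ n, |u n| ≤ C) {φ : ℕ → ℕ}
    (hφ : Filter.Tendsto φ Filter.atTop Filter.atTop)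
    (hsurj : ∀ n, ∃ m, φ m = n) (hmono : Monotone φ) :
    Filter.liminf (u ∘ φ) Filter.atTop = Filter.liminf u Filter.atTop := by
  refine le_antisymm ?_ (le_liminf_comp u C hb hφ)
  choose ψ hψ using hsurj
  have hψmono : StrictMono ψ := by
    apply strictMono_nat_of_lt_succ
    intro n
    by_contra hcon
    push_neg at hcon
    have := hmono hcon
    rw [hψ, hψ] at this
    omega
  have hco : (u ∘ φ) ∘ ψ = u := funext fun n => by simp [Function.comp, hψ]
  have := le_liminf_comp (u ∘ φ) C (fun n => hb (φ n)) hψmono.tendsto_atTop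
  rwa [hco] at this

lemma liminf_eq_of_diff {u v : ℕ → ℝ} {C : ℝ} (hu : ∀ n, |u n| ≤ C) (hv : ∀ n, |v n| ≤ C)
    (h : Filter.Tendsto (fun n => u n - v n) Filter.atTop (nhds 0)) :
    Filter.liminf u Filter.atTop = Filter.liminf v Filter.atTop := by
  have key : ∀ (a b : ℕ → ℝ), (∀ n, |a n| ≤ C) → (∀ n, |b n| ≤ C) →
      Filter.Tendsto (fun n => a n - b n) Filter.atTop (nhds 0) →
      Filter.liminf a Filter.atTop ≤ Filter.liminf b Filter.atTop := by
    intro a b ha hb hab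
    refine le_of_forall_pos_le_add ?_
    intro ε hε
    have hev : ∀ᶠ n in Filter.atTop, a n ≤ b n + ε := by
      filter_upwards [NormedAddCommGroup.tendsto_nhds_zero.mp hab ε hε] with n hn
      rw [Real.norm_eq_abs] at hn
      have := le_of_abs_le (le_of_lt hn)
      linarith
    have hcb : Filter.IsCoboundedUnder (· ≥ ·) Filter.atTop b :=
      (Filter.isBoundedUnder_of ⟨C, fun n => le_of_abs_le (hb n)⟩).isCoboundedUnder_ge
    have hbb : Filter.IsBoundedUnder (· ≥ ·) Filter.atTop b :=
      Filter.isBoundedUnder_of ⟨-C, fun n => neg_le_of_abs_le (hb n)⟩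
    calc Filter.liminf a Filter.atTop ≤ Filter.liminf (fun n => b n + ε) Filter.atTop := by
          refine Filter.liminf_le_liminf hev ?_ ?_
          · exact Filter.isBoundedUnder_of ⟨-C, fun n => neg_le_of_abs_le (ha n)⟩
          · exact (Filter.isBoundedUnder_of
              ⟨C + ε, fun n => by have := le_of_abs_le (hb n); linarith⟩).isCoboundedUnder_ge
      _ = Filter.liminf b Filter.atTop + ε := liminf_add_const Filter.atTop b ε hcb hbb
  exact le_antisymm (key u v hu hv h) (key v u hv hu (by simpa using h.neg))

lemma nat_ivt {f : ℕ → ℕ} (hstep : ∀ m, f (m + 1) ≤ f m + 1) {v : ℕ} :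
    ∀ {b : ℕ}, f 0 ≤ v → v ≤ f b → ∃ k, f k = v := by
  intro b
  induction b with
  | zero => intro h1 h2; exact ⟨0, le_antisymm h1 h2⟩
  | succ b ih =>
      intro h1 h2
      rcases le_or_gt v (f b) with h | h
      · exact ih h1 h
      · exact ⟨b + 1, by have := hstep b; omega⟩

end Analysis

section Growth
set_option linter.unusedSectionVars false
open Filter
variable {i : ℕ → ℕ}

lemma Jm_linear_bound (hi0 : i 0 = 0) (hmono : StrictMono i)
    (hgap : ∀ j, i (j + 1) - i j ≤ i (j + 2) - i (j + 1))
    (hunb : ∀ M : ℕ, ∃ j, M < i (j + 1) - i j) (K : ℕ) :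
    ∃ C : ℕ, ∀ m, (K + 1) * (Jm i m + 1) ≤ m + C := by
  obtain ⟨j0, hj0⟩ := hunb K
  have gmono : Monotone (fun j => i (j + 1) - i j) := monotone_nat_of_le_succ hgap
  have hgrow : ∀ t, i j0 + t * (K + 1) ≤ i (j0 + t) := by
    intro t
    induction t with
    | zero => simp
    | succ t ih =>
        have h1 : K < i (j0 + t + 1) - i (j0 + t) :=
          lt_of_lt_of_le hj0 (gmono (Nat.le_add_right j0 t))
        have h2 : i (j0 + t) ≤ i (j0 + t + 1) := hmono.monotone (Nat.le_succ _)
        have hr : (t + 1) * (K + 1) = t * (K + 1) + (K + 1) := by ring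
        have hadd : j0 + (t + 1) = j0 + t + 1 := rfl
        rw [hadd]
        omega
  refine ⟨(K + 1) * (j0 + 1), fun m => ?_⟩
  rcases le_or_gt (Jm i m) j0 with h | h
  · have := Nat.mul_le_mul_left (K + 1) (show Jm i m + 1 ≤ j0 + 1 by omega)
    omega
  · set t := Jm i m - j0 with ht
    have hJt : Jm i m = j0 + t := by omega
    have hgt := hgrow t
    have him : i (Jm i m) + Jm i m ≤ m := Jm_le hi0 hmono m
    rw [hJt] at him ⊢
    have hr : (K + 1) * (j0 + t + 1) = t * (K + 1) + (K + 1) * (j0 + 1) := by ring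
    omega

lemma tendsto_J_bound (hi0 : i 0 = 0) (hmono : StrictMono i)
    (hgap : ∀ j, i (j + 1) - i j ≤ i (j + 2) - i (j + 1))
    (hunb : ∀ M : ℕ, ∃ j, M < i (j + 1) - i j) (c L : ℝ) (hc : 0 ≤ c) :
    Tendsto (fun m : ℕ => c * ((Jm i m : ℝ) + 1) / ((m : ℝ) - L)) atTop (nhds 0) := by
  rw [NormedAddCommGroup.tendsto_nhds_zero]
  intro ε hε
  obtain ⟨K, hK⟩ := exists_nat_gt (2 * c / ε)
  have hKpos : (0:ℝ) < (K:ℝ) + 1 := by positivity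
  have hlim_target : c / ((K:ℝ)+1) < ε := by
    rw [div_lt_iff₀ hKpos]
    have h2 : 2 * c / ε < (K:ℝ) := hK
    rw [div_lt_iff₀ hε] at h2
    nlinarith
  obtain ⟨C, hC⟩ := Jm_linear_bound hi0 hmono hgap hunb K
  have hden : Tendsto (fun m : ℕ => (m:ℝ) - L) atTop atTop := by
    have heq : (fun m : ℕ => (m:ℝ) - L) = fun m : ℕ => (m:ℝ) + (-L) := by funext m; ring
    rw [heq]
    exact tendsto_atTop_add_const_right _ _ tendsto_natCast_atTop_atTop
  have hg : Tendsto (fun m : ℕ => c * ((m:ℝ) + C) / (((K:ℝ)+1) * ((m:ℝ) - L))) atTop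
      (nhds (c / ((K:ℝ)+1))) := by
    have h0 : Tendsto (fun m : ℕ => (c*C + c*L) / ((m:ℝ) - L)) atTop (nhds 0) :=
      tendsto_const_nhds.div_atTop hden
    have hsum : Tendsto (fun m : ℕ => c / ((K:ℝ)+1) + ((c*C + c*L) / ((m:ℝ) - L)) / ((K:ℝ)+1))
        atTop (nhds (c / ((K:ℝ)+1))) := by
      have := (tendsto_const_nhds (x := c / ((K:ℝ)+1)) (f := atTop (α := ℕ))).add
        (h0.div_const ((K:ℝ)+1))
      simpa using this
    refine hsum.congr' ?_
    filter_upwards [hden.eventually_gt_atTop 0] with m hm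
    field_simp
    ring
  filter_upwards [hden.eventually_gt_atTop 0, hg.eventually_lt_const hlim_target] with m hm1 hm2
  have hnum0 : (0:ℝ) ≤ c * ((Jm i m : ℝ) + 1) := by positivity
  rw [Real.norm_eq_abs, abs_of_nonneg (div_nonneg hnum0 (le_of_lt hm1))]
  refine lt_of_le_of_lt ?_ hm2
  rw [div_le_div_iff₀ hm1 (by positivity)]
  have hCm : ((K:ℝ)+1) * ((Jm i m : ℝ) + 1) ≤ (m:ℝ) + C := by exact_mod_cast hC m
  nlinarith [mul_le_mul_of_nonneg_left hCm (show (0:ℝ) ≤ c * ((m:ℝ) - L) by positivity)]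

end Growth

section FreqBound
set_option linter.unusedSectionVars false
open Filter
variable {α : Type*} [DecidableEq α] {S : ℕ → α} {S' : ℕ → Option α} {i : ℕ → ℕ}

lemma freq_diff_bound (hi0 : i 0 = 0) (hmono : StrictMono i)
    (hS' : ∀ j, pre S' (i j + j) = markPre S i j)
    {w : List (Option α)} {l : ℕ} (hw : w.length = l) (hl : 1 ≤ l) {m : ℕ} (hm : 2 * l ≤ m) :
    |freqn w (pre S' m) - freqn w (pre (fun n => (some (S n) : Option α)) (m - Jm i m))| ≤
      (2 * (l:ℝ) + 1) * ((Jm i m : ℝ) + 1) / ((m:ℝ) - ((l:ℝ) - 1)) := by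
  set T : ℕ → Option α := fun n => (some (S n) : Option α) with hT
  set j := Jm i m with hj
  set n := m - j with hn
  have h2j : 2 * j ≤ m := Jm_two_le hi0 hmono m
  have hln : l ≤ n := by omega
  have hw1 : 1 ≤ w.length := by omega
  obtain ⟨hc1, hc2⟩ := occ_compare hi0 hmono hS' hw1 m
  rw [← hj, ← hn, hw] at hc1 hc2
  have hocc2 : occ w (pre T n) + l ≤ n + 1 := by
    have := occ_le_sub (w := w) (x := pre T n) hw1 (by rw [hw, pre_length]; omega)
    rwa [hw, pre_length] at this
  have hmnj : (m:ℝ) = (n:ℝ) + (j:ℝ) := by exact_mod_cast (show m = n + j by omega)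
  have e1 : freqn w (pre S' m) = (occ w (pre S' m) : ℝ) / (((n:ℝ) - l + 1) + (j:ℝ)) := by
    rw [freqn, pre_length, hw]
    congr 1
    rw [hmnj]; ring
  have e2 : freqn w (pre T n) = (occ w (pre T n) : ℝ) / ((n:ℝ) - l + 1) := by
    rw [freqn, pre_length, hw]
  rw [e1, e2]
  have hb0 : (0:ℝ) ≤ (occ w (pre T n) : ℝ) := Nat.cast_nonneg _
  have hd2 : (1:ℝ) ≤ (n:ℝ) - l + 1 := by
    have : (l:ℝ) ≤ (n:ℝ) := by exact_mod_cast hln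
    linarith
  have hΔ : |(occ w (pre S' m) : ℝ) - (occ w (pre T n) : ℝ)| ≤ 2 * (l:ℝ) * ((j:ℝ) + 1) := by
    rw [abs_sub_le_iff]
    constructor
    · have h := hc1
      have h' : (occ w (pre S' m) : ℝ) ≤ (occ w (pre T n) : ℝ) + 2 * (l:ℝ) * ((j:ℝ) + 1) := by
        exact_mod_cast h
      linarith
    · have h := hc2
      have h' : (occ w (pre T n) : ℝ) ≤ (occ w (pre S' m) : ℝ) + 2 * (l:ℝ) * ((j:ℝ) + 1) := by
        exact_mod_cast h
      linarith
  have hbd : (occ w (pre T n) : ℝ) ≤ (n:ℝ) - l + 1 := by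
    have h' : ((occ w (pre T n) : ℝ)) + (l:ℝ) ≤ (n:ℝ) + 1 := by exact_mod_cast hocc2
    linarith
  refine le_trans (frac_diff hb0 hd2 (Nat.cast_nonneg j) hΔ hbd) ?_
  have hdeq : ((n:ℝ) - l + 1) + (j:ℝ) = (m:ℝ) - ((l:ℝ) - 1) := by
    rw [hmnj]; ring
  rw [hdeq]
  have hden : (0:ℝ) < (m:ℝ) - ((l:ℝ) - 1) := by
    rw [← hdeq]
    have h1 : (0:ℝ) ≤ (j:ℝ) := Nat.cast_nonneg j
    linarith
  have hnum : 2 * (l:ℝ) * ((j:ℝ) + 1) + (j:ℝ) ≤ (2 * (l:ℝ) + 1) * ((j:ℝ) + 1) := by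
    nlinarith [Nat.cast_nonneg (α := ℝ) j]
  exact (div_le_div_iff_of_pos_right hden).mpr hnum

end FreqBound

theorem marker_insertion_entropy {α : Type*} [Fintype α] [DecidableEq α]
    (S : ℕ → α) (S' : ℕ → Option α) (i : ℕ → ℕ)
    (hi0 : i 0 = 0) (hmono : StrictMono i)
    (hgap : ∀ j, i (j + 1) - i j ≤ i (j + 2) - i (j + 1))
    (hunb : ∀ M : ℕ, ∃ j, M < i (j + 1) - i j)
    (hS' : ∀ j, pre S' (i j + j) = markPre S i j) :
    (∀ l : ℕ, 0 < l → Hl S' l = Hl (fun n => (some (S n) : Option α)) l) ∧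
      ∀ L : ℝ, Tendsto (fun l => Hl S' l) atTop (nhds L) ↔
        Tendsto (fun l => Hl (fun n => (some (S n) : Option α)) l) atTop (nhds L) := by
  classical
  have key : ∀ l : ℕ, 0 < l → Hl S' l = Hl (fun n => (some (S n) : Option α)) l := by
    intro l hl
    have hl1 : (1:ℕ) ≤ l := hl
    set T : ℕ → Option α := fun n => (some (S n) : Option α) with hT
    set φ : ℕ → ℕ := fun m => m - Jm i m with hφdef
    set f' : ℕ → ℝ := fun m => ∑ v : Fin l → Option α,
      Real.negMulLog (freqn (List.ofFn v) (pre S' m)) with hf'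
    set f : ℕ → ℝ := fun m => ∑ v : Fin l → Option α,
      Real.negMulLog (freqn (List.ofFn v) (pre T m)) with hf
    have hwlen : ∀ v : Fin l → Option α, (List.ofFn v).length = l := fun v => List.length_ofFn
    have hw1 : ∀ v : Fin l → Option α, 1 ≤ (List.ofFn v).length := fun v => by
      rw [hwlen v]; omega
    set C : ℝ := (Fintype.card (Fin l → Option α) : ℝ) with hC
    have hbound : ∀ (U : ℕ → Option α) (m : ℕ),
        |∑ v : Fin l → Option α, Real.negMulLog (freqn (List.ofFn v) (pre U m))| ≤ C := by
      intro U m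
      refine le_trans (Finset.abs_sum_le_sum_abs _ _) ?_
      calc ∑ v : Fin l → Option α, |Real.negMulLog (freqn (List.ofFn v) (pre U m))|
          ≤ ∑ _v : Fin l → Option α, (1:ℝ) :=
            Finset.sum_le_sum fun v _ => negMulLog_abs_le (freqn_mem_Icc _ (hw1 v))
        _ = C := by simp [hC]
    have hφt : Tendsto φ atTop atTop := by
      rw [tendsto_atTop]
      intro b
      rw [eventually_atTop]
      refine ⟨2 * b, fun m hm => ?_⟩
      have := Jm_two_le hi0 hmono m
      simp only [hφdef]
      omega
    have hstep : ∀ m, φ (m + 1) ≤ φ m + 1 := by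
      intro m
      have h1 := Jm_succ_le hi0 hmono m
      have h2 := Jm_le_self hi0 hmono m
      have h3 : Jm i m ≤ Jm i (m + 1) := Jm_mono hi0 hmono (by omega)
      simp only [hφdef]
      omega
    have hφmono : Monotone φ := by
      apply monotone_nat_of_le_succ
      intro m
      have h1 : Jm i m ≤ Jm i (m + 1) := Jm_mono hi0 hmono (by omega)
      have h2 := Jm_succ_le hi0 hmono m
      have h3 := Jm_le_self hi0 hmono m
      simp only [hφdef]
      omega
    have hφsurj : ∀ n, ∃ m, φ m = n := by
      intro n
      obtain ⟨b, hb⟩ := (hφt.eventually_ge_atTop n).exists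
      refine nat_ivt hstep ?_ hb
      simp only [hφdef]
      omega
    have perv : ∀ v : Fin l → Option α,
        Tendsto (fun m => Real.negMulLog (freqn (List.ofFn v) (pre S' m)) -
          Real.negMulLog (freqn (List.ofFn v) (pre T (φ m)))) atTop (nhds 0) := by
      intro v
      refine negMulLog_tendsto_diff (fun m => freqn_mem_Icc _ (hw1 v))
        (fun m => freqn_mem_Icc _ (hw1 v)) ?_
      refine squeeze_zero_norm' ?_
        (tendsto_J_bound hi0 hmono hgap hunb (2*(l:ℝ)+1) ((l:ℝ)-1) (by positivity))
      rw [eventually_atTop]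
      refine ⟨2 * l, fun m hm => ?_⟩
      rw [Real.norm_eq_abs]
      exact freq_diff_bound hi0 hmono hS' (hwlen v) hl1 hm
    have hdiff : Tendsto (fun m => f' m - f (φ m)) atTop (nhds 0) := by
      have heq : ∀ m, f' m - f (φ m) = ∑ v : Fin l → Option α,
          (Real.negMulLog (freqn (List.ofFn v) (pre S' m)) -
            Real.negMulLog (freqn (List.ofFn v) (pre T (φ m)))) := by
        intro m
        rw [hf', hf, Finset.sum_sub_distrib]
      rw [funext heq]
      have := tendsto_finset_sum (Finset.univ : Finset (Fin l → Option α)) fun v _ => perv v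
      simpa using this
    have hlim : liminf f' atTop = liminf f atTop := by
      have h1 : liminf f' atTop = liminf (f ∘ φ) atTop :=
        liminf_eq_of_diff (hbound S') (fun m => hbound T (φ m)) hdiff
      have h2 : liminf (f ∘ φ) atTop = liminf f atTop :=
        liminf_comp_eq f C (hbound T) hφt hφsurj hφmono
      rw [h1, h2]
    simp only [Hl]
    rw [← hf', ← hf, hlim]
  refine ⟨key, fun L => ?_⟩
  exact tendsto_congr' (Filter.eventually_atTop.2 ⟨1, fun l hl => key l hl⟩)
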